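/- Let η be a substitution and u ∈ A^ℤ a two-sided periodic point of η with growing seed s = u_{-1}|u_0 and period p. For every n ∈ ℤ \ {−1, 0}, the u-quotient q of n satisfies: if n ≥ 1 then 0 ≤ q < n, and if n ≤ −2 then n < q ≤ −1. In particular |q| < |n|. -/

import Mathlib

open Filter List

variable {A : Type*}

/-- A substitution applied to a word: concatenation of the images of its letters. -/
def substW (η : A → List A) (w : List A) : List A := (w.map η).flatten

/-- The `k`-th iterate of a substitution applied to a word. -/
def iterW (η : A → List A) (k : ℕ) (w : List A) : List A := (substW η)^[k] w

/-- `η` is a substitution: nonempty images and at least one growing letter. -/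
def IsSubstitution (η : A → List A) : Prop :=
  (∀ c, η c ≠ []) ∧ ∃ a, Tendsto (fun k => (iterW η k [a]).length) atTop atTop

/-- `(m i, a i)` for `i = 0, …, len-1` is an `x`-admissible sequence:
`m (i) ++ [a i]` is a prefix of `η (a (i+1))` and `m (len-1) ++ [a (len-1)]`
is a prefix of `η x`. -/
def AdmSeq (η : A → List A) (len : ℕ) (m : ℕ → List A) (a : ℕ → A) (x : A) : Prop :=
  (∀ i, i + 1 < len → (m i ++ [a i]) <+: η (a (i + 1))) ∧
  (1 ≤ len → (m (len - 1) ++ [a (len - 1)]) <+: η x)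

/-- `Σ_{j<k} |η^j(m_j)|`. -/
def sumLen (η : A → List A) (k : ℕ) (m : ℕ → List A) : ℕ :=
  ∑ j ∈ Finset.range k, (iterW η j (m j)).length

/-- `η^{k-1}(m_{k-1}) η^{k-2}(m_{k-2}) ⋯ η^0(m_0)`. -/
def concatDT (η : A → List A) (k : ℕ) (m : ℕ → List A) : List A :=
  ((List.range k).reverse.map (fun j => iterW η j (m j))).flatten

/-- The digit word `|m_{k-1}| ⊙ |m_{k-2}| ⊙ ⋯ ⊙ |m_0|`. -/
def dtDigits (k : ℕ) (m : ℕ → List A) : List ℕ :=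
  (List.range k).reverse.map (fun j => (m j).length)

/-- Partial run of the automaton `A_{η,x}`: from state `x`, the digit `d`
moves to the `d`-th letter of `η x` when `d < |η x|`. -/
def run (η : A → List A) : List ℕ → A → Option A
  | [], x => some x
  | d :: w, x => if h : d < (η x).length then run η w ((η x)[d]) else none

/-- `u` restricted to nonnegative positions is a periodic point of `η` of period `p`:
every `η^p`-image of a prefix of `u` is again a prefix of `u`. -/
def RightPer (η : A → List A) (p : ℕ) (u : ℤ → A) : Prop :=
  ∀ n : ℕ, ∀ j : ℕ, j < (iterW η p (List.ofFn (fun i : Fin (n+1) => u i))).length →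
    (iterW η p (List.ofFn (fun i : Fin (n+1) => u i)))[j]? = some (u j)

/-- `u` restricted to negative positions is a periodic point of `η` of period `p`:
every `η^p`-image of a suffix `u_{-(n+1)} ⋯ u_{-1}` of the left part is again a
suffix of the left part of `u`. -/
def LeftPer (η : A → List A) (p : ℕ) (u : ℤ → A) : Prop :=
  ∀ n : ℕ, ∀ j : ℕ,
    j < (iterW η p (List.ofFn (fun i : Fin (n+1) => u ((i : ℤ) - (n+1))))).length →
    (iterW η p (List.ofFn (fun i : Fin (n+1) => u ((i : ℤ) - (n+1)))))[j]? =
      some (u ((j : ℤ) -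
        (iterW η p (List.ofFn (fun i : Fin (n+1) => u ((i : ℤ) - (n+1))))).length))

/-- `u : ℤ → A` is a two-sided periodic point of `η` of period `p ≥ 1` with
growing seed `u₋₁ | u₀`. -/
def TwoSidedPerPoint (η : A → List A) (p : ℕ) (u : ℤ → A) : Prop :=
  1 ≤ p ∧ RightPer η p u ∧ LeftPer η p u ∧
  Tendsto (fun k => (iterW η k [u 0]).length) atTop atTop ∧
  Tendsto (fun k => (iterW η k [u (-1)]).length) atTop atTop

/-- The Dumont–Thomas decomposition data of a positive integer `n` with respect to
the letter `x` (Theorem of Dumont–Thomas for the right-infinite part):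
`p ∣ k`, `p ≤ k`, the sequence is `x`-admissible, `m_{k-1} ⋯ m_{k-p} ≠ ε` and
`Σ_{j<k} |η^j(m_j)| = n`. -/
def PosSpec (η : A → List A) (p : ℕ) (x : A) (n : ℤ) (k : ℕ) (m : ℕ → List A)
    (a : ℕ → A) : Prop :=
  p ∣ k ∧ p ≤ k ∧ AdmSeq η k m a x ∧ (∃ i, i < p ∧ m (k - 1 - i) ≠ []) ∧
  (sumLen η k m : ℤ) = n

/-- The Dumont–Thomas decomposition data of an integer `n ≤ -2` with respect to
the letter `b` (Theorem of Dumont–Thomas for the left-infinite part). -/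
def NegSpec (η : A → List A) (p : ℕ) (b : A) (n : ℤ) (k : ℕ) (m : ℕ → List A)
    (a : ℕ → A) : Prop :=
  p ∣ k ∧ p ≤ k ∧ AdmSeq η k m a b ∧
  ((List.range p).map (fun i => iterW η (p - 1 - i) (m (k - 1 - i)))).flatten
      ++ [a (k - p)] ≠ iterW η p [b] ∧
  (sumLen η k m : ℤ) = n + (iterW η k [b]).length

/-- `w` is the Dumont–Thomas complement representation `rep_u(n)` of `n ∈ ℤ`. -/
def RepSpec (η : A → List A) (p : ℕ) (u : ℤ → A) (n : ℤ) (w : List ℕ) : Prop :=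
  (n = 0 ∧ w = [0]) ∨ (n = -1 ∧ w = [1]) ∨
  (1 ≤ n ∧ ∃ k m a, PosSpec η p (u 0) n k m a ∧ w = 0 :: dtDigits k m) ∨
  (n ≤ -2 ∧ ∃ k m a, NegSpec η p (u (-1)) n k m a ∧ w = 1 :: dtDigits k m)

/-- Run of the automaton `A_{η,s}` with initial state `start`: the first digit
`0` (resp. `1`) moves to `u 0` (resp. `u (-1)`). -/
def runSeed (η : A → List A) (u : ℤ → A) : List ℕ → Option A
  | [] => none
  | d :: w => if d = 0 then run η w (u 0) else if d = 1 then run η w (u (-1)) else none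

/-- `|η^{k-p-1}(m_{k-1}) ⋯ η^0(m_p)|`, the `u`-quotient of a positive integer. -/
def uQuotPos (η : A → List A) (p k : ℕ) (m : ℕ → List A) : ℤ :=
  ∑ j ∈ Finset.range (k - p), ((iterW η j (m (j + p))).length : ℤ)

/-- `w = tail_{η,p,x}(n)`: the digit word of the unique `x`-admissible sequence of
length `p` whose length-sum is `n`. -/
def TailSpec (η : A → List A) (p : ℕ) (x : A) (n : ℕ) (w : List ℕ) : Prop :=
  ∃ m a, AdmSeq η p m a x ∧ sumLen η p m = n ∧ w = dtDigits p m

/-- Radix order: shorter words first, ties broken lexicographically. -/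
def radLt (v w : List ℕ) : Prop :=
  v.length < w.length ∨ (v.length = w.length ∧ List.Lex (· < ·) v w)

/-- Reversed-radix order: longer words first, ties broken lexicographically. -/
def revLt (v w : List ℕ) : Prop :=
  w.length < v.length ∨ (v.length = w.length ∧ List.Lex (· < ·) v w)

/-- The total order `≺` on `{0,1}D*`. -/
def precLt (v w : List ℕ) : Prop :=
  (v.head? = some 1 ∧ w.head? = some 0) ∨
  (v.head? = some 0 ∧ w.head? = some 0 ∧ radLt v w) ∨
  (v.head? = some 1 ∧ w.head? = some 1 ∧ revLt v w)

/-- The base-2 value `Σ_{i<k} w_i 2^i` of the word `w = w_{k-1} ⋯ w_0`. -/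
def natVal2 (w : List ℕ) : ℕ := w.foldl (fun acc d => 2 * acc + d) 0

/-- The two's complement value `Σ_{i<k} w_i 2^i − w_{k-1} 2^k`. -/
def val2c (w : List ℕ) : ℤ := (natVal2 w : ℤ) - (w.headI : ℤ) * 2 ^ w.length

/-- Fibonacci numbers with `F 0 = 1`, `F 1 = 2`. -/
def fib2 : ℕ → ℕ
  | 0 => 1
  | 1 => 2
  | n + 2 => fib2 (n + 1) + fib2 n

/-- The Fibonacci complement value `Σ_{i<k} w_i F_i − w_{k-1} F_k`
of the word `w = w_{k-1} ⋯ w_0`. -/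
def valFc (w : List ℕ) : ℤ :=
  (∑ i ∈ Finset.range w.length, (w.reverse.getD i 0 : ℤ) * fib2 i) -
    (w.headI : ℤ) * fib2 w.length

namespace DT
variable {η : A → List A}
section B0

variable {η : A → List A}

lemma substW_append (v w : List A) : substW η (v ++ w) = substW η v ++ substW η w := by
  simp [substW]

lemma substW_singleton (c : A) : substW η [c] = η c := by simp [substW]

lemma iterW_zero (w : List A) : iterW η 0 w = w := rfl

lemma iterW_succ (t : ℕ) (w : List A) : iterW η (t+1) w = iterW η t (substW η w) :=
  Function.iterate_succ_apply ..

lemma iterW_succ' (t : ℕ) (w : List A) : iterW η (t+1) w = substW η (iterW η t w) :=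
  Function.iterate_succ_apply' ..

lemma iterW_add (s t : ℕ) (w : List A) : iterW η (s+t) w = iterW η s (iterW η t w) :=
  Function.iterate_add_apply ..

lemma iterW_append (t : ℕ) (v w : List A) :
    iterW η t (v ++ w) = iterW η t v ++ iterW η t w := by
  induction t generalizing v w with
  | zero => rfl
  | succ t ih => rw [iterW_succ, substW_append, ih, iterW_succ, iterW_succ]

lemma iterW_nil (t : ℕ) : iterW η t ([] : List A) = [] := by
  induction t with
  | zero => rfl
  | succ t ih => rw [iterW_succ]; simpa [substW] using ih

lemma iterW_one_singleton (c : A) : iterW η 1 [c] = η c := by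
  rw [iterW_succ, iterW_zero, substW_singleton]

variable (hne : ∀ c, η c ≠ [])
include hne

lemma substW_ne_nil {w : List A} (h : w ≠ []) : substW η w ≠ [] := by
  cases w with
  | nil => simp at h
  | cons c w => simp [substW, hne c]

lemma iterW_ne_nil (t : ℕ) {w : List A} (h : w ≠ []) : iterW η t w ≠ [] := by
  induction t with
  | zero => exact h
  | succ t ih => rw [iterW_succ']; exact substW_ne_nil hne ih

lemma length_le_substW (w : List A) : w.length ≤ (substW η w).length := by
  induction w with
  | nil => simp [substW]
  | cons c w ih =>
      have : η c ≠ [] := hne c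
      have h1 : 1 ≤ (η c).length := Nat.one_le_iff_ne_zero.mpr (by simpa using this)
      calc (c :: w).length = 1 + w.length := by simp [Nat.add_comm]
      _ ≤ (η c).length + (substW η w).length := Nat.add_le_add h1 ih
      _ = (substW η (c :: w)).length := by
          show _ = (substW η ([c] ++ w)).length
          rw [substW_append]; simp [substW_singleton]

lemma length_le_iterW (t : ℕ) (w : List A) : w.length ≤ (iterW η t w).length := by
  induction t with
  | zero => exact le_refl _
  | succ t ih => rw [iterW_succ']; exact ih.trans (length_le_substW hne _)

lemma length_iterW_mono {s t : ℕ} (h : s ≤ t) (w : List A) :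
    (iterW η s w).length ≤ (iterW η t w).length := by
  obtain ⟨d, rfl⟩ := Nat.exists_eq_add_of_le h
  rw [Nat.add_comm, iterW_add]
  exact length_le_iterW hne d _


end B0

section B2

variable {η : A → List A}

lemma prefix_append_left {v w : List A} (u : List A) (h : v <+: w) : u ++ v <+: u ++ w := by
  obtain ⟨r, rfl⟩ := h; exact ⟨r, by simp⟩

lemma iterW_prefix {v w : List A} (t : ℕ) (h : v <+: w) : iterW η t v <+: iterW η t w := by
  obtain ⟨r, rfl⟩ := h; rw [iterW_append]; exact ⟨_, rfl⟩

lemma head?_of_prefix {v w : List A} (h : v <+: w) (hv : v ≠ []) : w.head? = v.head? := by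
  obtain ⟨r, rfl⟩ := h
  cases v with
  | nil => simp at hv
  | cons d t => rfl

variable (hne : ∀ c, η c ≠ [])
include hne

lemma head?_iterW {w : List A} {c : A} (t : ℕ) (h : w.head? = some c) :
    (iterW η t w).head? = (iterW η t [c]).head? := by
  cases w with
  | nil => simp at h
  | cons d tl =>
      simp only [List.head?_cons, Option.some.injEq] at h
      subst h
      have hd : (d :: tl) = [d] ++ tl := rfl
      rw [hd, iterW_append, head?_append_of_ne_nil _ (iterW_ne_nil hne t (by simp))]

lemma getLast?_iterW {w : List A} {c : A} (t : ℕ) (h : w.getLast? = some c) :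
    (iterW η t w).getLast? = (iterW η t [c]).getLast? := by
  obtain ⟨w', rfl⟩ := List.getLast?_eq_some_iff.mp h
  rw [iterW_append, List.getLast?_append]
  have h1 : (iterW η t [c]).getLast? ≠ none := by
    simp only [ne_eq, List.getLast?_eq_none_iff]
    exact iterW_ne_nil hne t (by simp)
  cases h2 : (iterW η t [c]).getLast? with
  | none => exact absurd h2 h1
  | some x => rfl

lemma length_lt_of_head {w : List A} {c : A} (t : ℕ) (h : w.head? = some c)
    (h2 : 2 ≤ (iterW η t [c]).length) : w.length < (iterW η t w).length := by
  cases w with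
  | nil => simp at h
  | cons d tl =>
      simp only [List.head?_cons, Option.some.injEq] at h
      subst h
      have hd : (d :: tl) = [d] ++ tl := rfl
      rw [hd, iterW_append, List.length_append]
      have := length_le_iterW hne t tl
      simp only [List.length_append, List.length_cons, List.length_nil, List.length_singleton]
      omega

lemma length_lt_of_getLast {w : List A} {c : A} (t : ℕ) (h : w.getLast? = some c)
    (h2 : 2 ≤ (iterW η t [c]).length) : w.length < (iterW η t w).length := by
  obtain ⟨w', rfl⟩ := List.getLast?_eq_some_iff.mp h
  rw [iterW_append, List.length_append, List.length_append]
  have := length_le_iterW hne t w'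
  simp only [List.length_singleton]
  omega


end B2

section B3

variable {η : A → List A}

lemma not_growing_of_fixed {p : ℕ} {x : A} (hp : 1 ≤ p) (hfix : iterW η p [x] = [x])
    (hgrow : Tendsto (fun t => (iterW η t [x]).length) atTop atTop) : False := by
  have h1 : ∀ t, iterW η (p * t) [x] = [x] := by
    intro t
    induction t with
    | zero => rfl
    | succ t ih => rw [Nat.mul_succ, iterW_add, hfix, ih]
  have hmul : Tendsto (fun t : ℕ => p * t) atTop atTop :=
    tendsto_atTop_mono (fun t => Nat.le_mul_of_pos_left t hp) tendsto_id
  have h2 : Tendsto (fun t => (iterW η (p * t) [x]).length) atTop atTop := hgrow.comp hmul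
  simp only [h1] at h2
  obtain ⟨t, ht⟩ := (tendsto_atTop.mp h2 2).exists
  simp at ht

variable (hne : ∀ c, η c ≠ [])
include hne

lemma two_le_of_head {p : ℕ} {x : A} (hp : 1 ≤ p) (hhead : (iterW η p [x]).head? = some x)
    (hgrow : Tendsto (fun t => (iterW η t [x]).length) atTop atTop) :
    2 ≤ (iterW η p [x]).length := by
  by_contra hlt
  push_neg at hlt
  have h0 : iterW η p [x] ≠ [] := iterW_ne_nil hne p (by simp)
  interval_cases h : (iterW η p [x]).length
  · exact h0 (List.length_eq_zero_iff.mp h)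
  · obtain ⟨c, hc⟩ := List.length_eq_one_iff.mp h
    rw [hc] at hhead
    simp only [List.head?_cons, Option.some.injEq] at hhead
    exact not_growing_of_fixed hp (by rw [hc, hhead]) hgrow

lemma two_le_of_getLast {p : ℕ} {x : A} (hp : 1 ≤ p) (hlast : (iterW η p [x]).getLast? = some x)
    (hgrow : Tendsto (fun t => (iterW η t [x]).length) atTop atTop) :
    2 ≤ (iterW η p [x]).length := by
  by_contra hlt
  push_neg at hlt
  have h0 : iterW η p [x] ≠ [] := iterW_ne_nil hne p (by simp)
  interval_cases h : (iterW η p [x]).length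
  · exact h0 (List.length_eq_zero_iff.mp h)
  · obtain ⟨c, hc⟩ := List.length_eq_one_iff.mp h
    rw [hc] at hlast
    simp only [List.getLast?_singleton, Option.some.injEq] at hlast
    exact not_growing_of_fixed hp (by rw [hc, hlast]) hgrow

lemma head?_pow {p : ℕ} {x : A} (hhead : (iterW η p [x]).head? = some x) :
    ∀ t, (iterW η (p * t) [x]).head? = some x := by
  intro t
  induction t with
  | zero => rfl
  | succ t ih =>
      rw [Nat.mul_succ, iterW_add, head?_iterW hne _ hhead]
      exact ih

lemma getLast?_pow {p : ℕ} {x : A} (hlast : (iterW η p [x]).getLast? = some x) :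
    ∀ t, (iterW η (p * t) [x]).getLast? = some x := by
  intro t
  induction t with
  | zero => rfl
  | succ t ih =>
      rw [Nat.mul_succ, iterW_add, getLast?_iterW hne _ hlast]
      exact ih


end B3

section B4

variable {η : A → List A}

/-- `η^{c-1}(m'_{c-1}) ⋯ η^0(m'_0)`. -/
def chainC (η : A → List A) (c : ℕ) (m' : ℕ → List A) : List A :=
  ((List.range c).reverse.map (fun j => iterW η j (m' j))).flatten

lemma chainC_zero (m' : ℕ → List A) : chainC η 0 m' = [] := rfl

lemma chainC_succ (c : ℕ) (m' : ℕ → List A) :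
    chainC η (c+1) m' = iterW η c (m' c) ++ chainC η c m' := by
  simp [chainC, List.range_succ]

lemma length_chainC (c : ℕ) (m' : ℕ → List A) :
    (chainC η c m').length = ∑ j ∈ Finset.range c, (iterW η j (m' j)).length := by
  induction c with
  | zero => rfl
  | succ c ih =>
      rw [chainC_succ, List.length_append, ih, Finset.sum_range_succ]
      omega

lemma chainC_split {l c : ℕ} (h : l ≤ c) (m' : ℕ → List A) :
    chainC η c m' = iterW η l (chainC η (c - l) (fun j => m' (j + l))) ++ chainC η l m' := by
  obtain ⟨d, rfl⟩ := Nat.exists_eq_add_of_le h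
  induction d with
  | zero => simp [chainC_zero, iterW_nil]
  | succ d ih =>
      have e1 : l + (d + 1) = (l + d) + 1 := by omega
      have e2 : l + (d + 1) - l = d + 1 := by omega
      have e3 : l + d - l = d := by omega
      rw [e2, e1, chainC_succ (l+d), chainC_succ d, ih (by omega), e3, iterW_append,
        ← iterW_add, Nat.add_comm d l, List.append_assoc]

lemma iterW_one_singleton' (x : A) : iterW η 1 [x] = η x := by
  rw [iterW_succ, substW_singleton]; rfl

lemma chain_prefix {c : ℕ} (hc : 1 ≤ c) (m' : ℕ → List A) (a' : ℕ → A) (x : A)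
    (h1 : ∀ j, j + 1 < c → m' j ++ [a' j] <+: η (a' (j + 1)))
    (h2 : m' (c - 1) ++ [a' (c - 1)] <+: η x) :
    chainC η c m' ++ [a' 0] <+: iterW η c [x] := by
  induction c generalizing x with
  | zero => omega
  | succ c ih =>
      rcases Nat.eq_zero_or_pos c with rfl | hc'
      · simpa [chainC_succ, chainC_zero, iterW_one_singleton', iterW_zero] using h2
      · -- inductive step
        have hsub : chainC η c m' ++ [a' 0] <+: iterW η c [a' c] := by
          apply ih hc' (a' c) (fun j hj => h1 j (by omega))
          have := h1 (c - 1) (by omega)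
          rwa [Nat.sub_add_cancel hc'] at this
        have h2' : m' c ++ [a' c] <+: η x := by simpa using h2
        have step : iterW η c (m' c) ++ iterW η c [a' c] <+: iterW η (c+1) [x] := by
          have : iterW η c (m' c ++ [a' c]) <+: iterW η c (η x) := iterW_prefix c h2'
          rw [iterW_append] at this
          have e : iterW η (c+1) [x] = iterW η c (η x) := by
            rw [iterW_succ, substW_singleton]
          rw [e]
          exact this
        rw [chainC_succ, List.append_assoc]
        exact (prefix_append_left _ hsub).trans step

lemma chain_nested {c l : ℕ} (hl : l < c) (m' : ℕ → List A) (a' : ℕ → A)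
    (h1 : ∀ j, j + 1 < c → m' j ++ [a' j] <+: η (a' (j + 1))) :
    chainC η c m' ++ [a' 0] <+:
      iterW η l (chainC η (c - l) (fun j => m' (j + l)) ++ [a' l]) := by
  rw [iterW_append, chainC_split (le_of_lt hl) m', List.append_assoc]
  apply prefix_append_left
  rcases Nat.eq_zero_or_pos l with rfl | hl'
  · simp only [chainC_zero, List.nil_append]
    exact List.prefix_refl _
  · apply chain_prefix hl' m' a' (a' l) (fun j hj => h1 j (by omega))
    have := h1 (l - 1) (by omega)
    rwa [Nat.sub_add_cancel hl'] at this

lemma map_range_rev (p : ℕ) (g : ℕ → List A) :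
    (List.range p).map (fun i => g (p - 1 - i)) = (List.range p).reverse.map g := by
  rw [List.map_reverse]
  induction p with
  | zero => rfl
  | succ p ih =>
      conv_rhs => rw [List.range_succ]
      conv_lhs => rw [List.range_succ_eq_map]
      simp only [List.map_append, List.reverse_append, List.reverse_singleton,
        List.singleton_append, List.map_cons, List.map_map, List.map_nil,
        Nat.add_sub_cancel, Nat.sub_zero]
      congr 1
      rw [← ih]
      apply List.map_congr_left
      intro i hi
      simp only [Function.comp_apply]
      congr 1
      omega

end B4

section B5

variable {η : A → List A}

lemma head?_substW (hne : ∀ c, η c ≠ []) {w : List A} {c : A} (h : w.head? = some c) :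
    (substW η w).head? = (η c).head? := by
  cases w with
  | nil => simp at h
  | cons d tl =>
      simp only [List.head?_cons, Option.some.injEq] at h
      rw [← h]
      show (substW η ([d] ++ tl)).head? = _
      rw [substW_append]
      simp only [substW, List.map_cons, List.map_nil, List.flatten_cons, List.flatten_nil,
        List.append_nil]
      exact List.head?_append_of_ne_nil _ (hne d)

lemma right_seed (hne : ∀ c, η c ≠ []) {p : ℕ} {u : ℤ → A} (hR : RightPer η p u) :
    (iterW η p [u 0]).head? = some (u 0) := by
  have e : (List.ofFn (fun i : Fin (0+1) => u i)) = [u 0] := by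
    simp [List.ofFn_succ]
  have hlen : 0 < (iterW η p (List.ofFn (fun i : Fin (0+1) => u i))).length := by
    rw [e]
    exact List.length_pos_iff.mpr (iterW_ne_nil hne p (by simp))
  have h0 := hR 0 0 hlen
  rw [e] at h0
  rw [List.head?_eq_getElem?]
  simpa using h0

lemma left_seed (hne : ∀ c, η c ≠ []) {p : ℕ} {u : ℤ → A} (hL : LeftPer η p u) :
    (iterW η p [u (-1)]).getLast? = some (u (-1)) := by
  have e : (List.ofFn (fun i : Fin (0+1) => u ((i : ℤ) - (((0:ℕ):ℤ)+1)))) = [u (-1)] := by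
    simp [List.ofFn_succ]
  have hlen : 0 < (iterW η p (List.ofFn
      (fun i : Fin (0+1) => u ((i : ℤ) - (((0:ℕ):ℤ)+1))))).length := by
    rw [e]
    exact List.length_pos_iff.mpr (iterW_ne_nil hne p (by simp))
  have h0 := hL 0 ((iterW η p (List.ofFn
      (fun i : Fin (0+1) => u ((i : ℤ) - (((0:ℕ):ℤ)+1))))).length - 1) (by omega)
  rw [e] at h0 hlen
  rw [List.getLast?_eq_getElem?, h0]
  congr 2
  omega

end B5

end DT

/-- The `u`-quotient `q` of `n ∈ ℤ \ {-1,0}` satisfies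
`0 ≤ q < n` when `n ≥ 1` and `n < q ≤ -1` when `n ≤ -2`; in particular
`|q| < |n|`. -/
theorem quotient_bounds [Finite A] (η : A → List A) (hη : IsSubstitution η)
    (p : ℕ) (u : ℤ → A) (hu : TwoSidedPerPoint η p u) (n : ℤ) :
    (∀ (k : ℕ) (m : ℕ → List A) (a : ℕ → A), 1 ≤ n →
      PosSpec η p (u 0) n k m a →
      0 ≤ uQuotPos η p k m ∧ uQuotPos η p k m < n ∧
        (uQuotPos η p k m).natAbs < n.natAbs) ∧
    (∀ (k : ℕ) (m : ℕ → List A) (a : ℕ → A), n ≤ -2 →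
      NegSpec η p (u (-1)) n k m a →
      n < uQuotPos η p k m - (iterW η (k - p) [u (-1)]).length ∧
      uQuotPos η p k m - (iterW η (k - p) [u (-1)]).length ≤ -1 ∧
      (uQuotPos η p k m - (iterW η (k - p) [u (-1)]).length).natAbs < n.natAbs) := by
  classical
  obtain ⟨hne, -⟩ := hη
  obtain ⟨hp, hR, hL, hg0, hg1⟩ := hu
  have hseedR := DT.right_seed hne hR
  have two0 : 2 ≤ (iterW η p [u 0]).length := DT.two_le_of_head hne hp hseedR hg0
  have headpow := DT.head?_pow hne hseedR
  have hseedL := DT.left_seed hne hL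
  have two1 : 2 ≤ (iterW η p [u (-1)]).length := DT.two_le_of_getLast hne hp hseedL hg1
  have lastpow := DT.getLast?_pow hne hseedL
  constructor
  · rintro k m a hn ⟨hdvd, hpk, ⟨h1, h2⟩, ⟨i₀, hi₀p, hi₀ne⟩, hsum⟩
    obtain ⟨t, hkt⟩ := hdvd
    by_cases hkp : k = p
    · have hq0 : uQuotPos η p k m = 0 := by simp [uQuotPos, hkp]
      rw [hq0]
      exact ⟨le_refl 0, by omega, by omega⟩
    · have ht2 : 2 ≤ t := by
        rcases t with _ | _ | t
        · omega
        · omega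
        · omega
      have hk2 : 2 * p ≤ k := by
        have h22 : p * 2 ≤ p * t := Nat.mul_le_mul_left _ ht2
        omega
      have e_kp : k - p = p * (t - 1) := by
        rcases t with _ | t'
        · omega
        · rw [hkt, Nat.succ_sub_one, Nat.mul_succ]
          omega
      have headW : (iterW η (k - p) [u 0]).head? = some (u 0) := by
        rw [e_kp]; exact headpow (t - 1)
      have hex : ∃ i, m (k - 1 - i) ≠ [] := ⟨i₀, hi₀ne⟩
      set i := Nat.find hex with hidef
      have hiM : m (k - 1 - i) ≠ [] := Nat.find_spec hex
      have hi_p : i < p := lt_of_le_of_lt (Nat.find_min' hex hi₀ne) hi₀p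
      have hmin : ∀ i', i' < i → m (k - 1 - i') = [] := by
        intro i' h
        have := Nat.find_min hex h
        simpa using this
      have AHEAD : ∀ i', 1 ≤ i' → i' ≤ i → (iterW η i' [u 0]).head? = some (a (k - i')) := by
        intro i'
        induction i' with
        | zero => omega
        | succ i' ih =>
            intro _ hle
            rcases Nat.eq_zero_or_pos i' with rfl | hpos
            · have hm : m (k - 1) = [] := hmin 0 (by omega)
              have hpre := h2 (by omega)
              rw [hm, List.nil_append] at hpre
              rw [DT.iterW_one_singleton]
              rw [DT.head?_of_prefix hpre (by simp)]
              rfl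
            · have hprev := ih (by omega) (by omega)
              have hm : m (k - 1 - i') = [] := hmin i' (by omega)
              have hh := h1 (k - 1 - i') (by omega)
              rw [hm, List.nil_append] at hh
              rw [show k - 1 - i' + 1 = k - i' from by omega] at hh
              rw [DT.iterW_succ', DT.head?_substW hne hprev,
                DT.head?_of_prefix hh (by simp)]
              rw [show k - 1 - i' = k - (i' + 1) from by omega]
              rfl
      have HEADM : (m (k - 1 - i)).head? = (iterW η (i + 1) [u 0]).head? := by
        rcases Nat.eq_zero_or_pos i with hi0 | hip
        · have hpre : m (k - 1) ++ [a (k - 1)] <+: η (u 0) := h2 (by omega)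
          have hpre' : m (k - 1) <+: η (u 0) := (List.prefix_append _ _).trans hpre
          rw [hi0, Nat.sub_zero, DT.iterW_one_singleton]
          rw [hi0, Nat.sub_zero] at hiM
          exact (DT.head?_of_prefix hpre' hiM).symm
        · have hprev := AHEAD i hip (le_refl i)
          have hh := h1 (k - 1 - i) (by omega)
          rw [show k - 1 - i + 1 = k - i from by omega] at hh
          have hh' : m (k - 1 - i) <+: η (a (k - i)) := (List.prefix_append _ _).trans hh
          rw [DT.iterW_succ', DT.head?_substW hne hprev]
          exact (DT.head?_of_prefix hh' hiM).symm
      obtain ⟨c₀, hc₀⟩ : ∃ c₀, (m (k - 1 - i)).head? = some c₀ := by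
        cases hm : m (k - 1 - i) with
        | nil => exact absurd hm hiM
        | cons d tl => exact ⟨d, rfl⟩
      have hw : (iterW η (k - 1 - i - p) (m (k - 1 - i))).head? = some (u 0) := by
        have e1 := DT.head?_iterW hne (k - 1 - i - p) hc₀
        have hc₁ : (iterW η (i + 1) [u 0]).head? = some c₀ := HEADM.symm.trans hc₀
        have e2 := DT.head?_iterW hne (k - 1 - i - p) hc₁
        rw [← DT.iterW_add] at e2
        rw [show k - 1 - i - p + (i + 1) = k - p from by omega] at e2
        rw [e1, ← e2, headW]
      have hstrict : (iterW η (k - 1 - i - p) (m (k - 1 - i))).length <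
          (iterW η (k - 1 - i) (m (k - 1 - i))).length := by
        have hs := DT.length_lt_of_head hne p hw two0
        rw [← DT.iterW_add] at hs
        rwa [show p + (k - 1 - i - p) = k - 1 - i from by omega] at hs
      have hsum1 : ∑ j ∈ Finset.range (k - p), (iterW η j (m (j + p))).length <
          ∑ j ∈ Finset.range (k - p), (iterW η (j + p) (m (j + p))).length := by
        apply Finset.sum_lt_sum
        · intro j hj
          exact DT.length_iterW_mono hne (by omega) _
        · refine ⟨k - 1 - i - p, Finset.mem_range.mpr (by omega), ?_⟩
          rw [show k - 1 - i - p + p = k - 1 - i from by omega]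
          exact hstrict
      have hsum2 : ∑ j ∈ Finset.range (k - p), (iterW η (j + p) (m (j + p))).length ≤
          sumLen η k m := by
        have e1 : ∑ j ∈ Finset.range (k - p), (iterW η (j + p) (m (j + p))).length
            = ∑ j ∈ Finset.Ico p k, (iterW η j (m j)).length := by
          rw [Finset.sum_Ico_eq_sum_range, show k - p = k - p from rfl]
          apply Finset.sum_congr rfl
          intro j hj
          rw [Nat.add_comm p j]
        rw [e1, sumLen]
        apply Finset.sum_le_sum_of_subset
        intro x hx
        simp only [Finset.mem_Ico, Finset.mem_range] at *
        omega
      have hqz : uQuotPos η p k m =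
          ((∑ j ∈ Finset.range (k - p), (iterW η j (m (j + p))).length : ℕ) : ℤ) := by
        rw [uQuotPos]
        push_cast
        rfl
      have hlt' : uQuotPos η p k m < n := by
        rw [hqz, ← hsum]
        exact_mod_cast lt_of_lt_of_le hsum1 hsum2
      have hge' : 0 ≤ uQuotPos η p k m := by
        rw [hqz]
        positivity
      exact ⟨hge', hlt', by omega⟩
  · rintro k m a hn ⟨hdvd, hpk, ⟨h1, h2⟩, hneq, hsum⟩
    obtain ⟨t, hkt⟩ := hdvd
    by_cases hkp : k = p
    · have hq0 : uQuotPos η p k m = 0 := by simp [uQuotPos, hkp]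
      have hW : iterW η (k - p) [u (-1)] = [u (-1)] := by rw [hkp, Nat.sub_self]; rfl
      rw [hq0, hW]
      refine ⟨?_, ?_, ?_⟩ <;> simp <;> omega
    · have ht2 : 2 ≤ t := by
        rcases t with _ | _ | t
        · omega
        · omega
        · omega
      have hk2 : 2 * p ≤ k := by
        have h22 : p * 2 ≤ p * t := Nat.mul_le_mul_left _ ht2
        omega
      have e_kp : k - p = p * (t - 1) := by
        rcases t with _ | t'
        · omega
        · rw [hkt, Nat.succ_sub_one, Nat.mul_succ]
          omega
      have lastW : (iterW η (k - p) [u (-1)]).getLast? = some (u (-1)) := by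
        rw [e_kp]; exact lastpow (t - 1)
      -- h1 for the shifted chain
      have h1s : ∀ j, j + 1 < k - p →
          m (j + p) ++ [a (j + p)] <+: η (a (j + 1 + p)) := by
        intro j hj
        have := h1 (j + p) (by omega)
        rwa [show j + p + 1 = j + 1 + p from by omega] at this
      -- (2) : C' is a prefix of W
      have hC' : DT.chainC η (k - p) (fun j => m (j + p)) ++ [a p] <+:
          iterW η (k - p) [u (-1)] := by
        have h0 := DT.chain_prefix (η := η) (c := k - p) (by omega)
          (fun j => m (j + p)) (fun j => a (j + p)) (u (-1)) h1s ?_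
        · simpa using h0
        · have := h2 (by omega)
          show m (k - p - 1 + p) ++ [a (k - p - 1 + p)] <+: η (u (-1))
          rwa [show k - p - 1 + p = k - 1 from by omega]
      -- (1) : C0 is a prefix of η^p(C')
      have hC0 : DT.chainC η k m ++ [a 0] <+:
          iterW η p (DT.chainC η (k - p) (fun j => m (j + p)) ++ [a p]) :=
        DT.chain_nested (by omega) m a h1
      obtain ⟨r, hr⟩ := hC'
      have hKsplit : iterW η k [u (-1)] =
          iterW η p (DT.chainC η (k - p) (fun j => m (j + p)) ++ [a p]) ++ iterW η p r := by
        rw [← DT.iterW_append, hr, ← DT.iterW_add, show p + (k - p) = k from by omega]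
      by_cases hrnil : r = []
      · -- Case B : impossible by the ≠ condition of NegSpec
        exfalso
        have hD0eq : ((List.range p).map (fun i => iterW η (p - 1 - i) (m (k - 1 - i)))).flatten
            = DT.chainC η p (fun j => m (j + (k - p))) := by
          rw [DT.chainC, ← DT.map_range_rev]
          congr 1
          apply List.map_congr_left
          intro i hi
          simp only [List.mem_range] at hi
          show iterW η (p - 1 - i) (m (k - 1 - i)) = iterW η (p - 1 - i) (m (p - 1 - i + (k - p)))
          rw [show k - 1 - i = p - 1 - i + (k - p) from by omega]
        have hD0 : DT.chainC η p (fun j => m (j + (k - p))) ++ [a (k - p)] <+: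
            iterW η p [u (-1)] := by
          have h0 := DT.chain_prefix (η := η) (c := p) hp
            (fun j => m (j + (k - p))) (fun j => a (j + (k - p))) (u (-1)) ?_ ?_
          · simpa using h0
          · intro j hj
            have := h1 (j + (k - p)) (by omega)
            rwa [show j + (k - p) + 1 = j + 1 + (k - p) from by omega] at this
          · have := h2 (by omega)
            show m (p - 1 + (k - p)) ++ [a (p - 1 + (k - p))] <+: η (u (-1))
            rwa [show p - 1 + (k - p) = k - 1 from by omega]
        have hproper : DT.chainC η p (fun j => m (j + (k - p))) ++ [a (k - p)] ≠
            iterW η p [u (-1)] := by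
          rw [← hD0eq]
          exact hneq
        obtain ⟨r2, hr2⟩ := hD0
        have hr2ne : r2 ≠ [] := by
          rintro rfl
          exact hproper (by simpa using hr2)
        have hnest2 := DT.chain_nested (η := η) (c := k - p) (l := k - 2*p) (by omega)
          (fun j => m (j + p)) (fun j => a (j + p)) h1s
        rw [show k - p - (k - 2*p) = p from by omega] at hnest2
        beta_reduce at hnest2
        rw [show (fun j => m (j + (k - 2*p) + p)) = (fun j => m (j + (k - p))) from
            funext fun j => by rw [show j + (k - 2*p) + p = j + (k - p) from by omega],
          show k - 2*p + p = k - p from by omega] at hnest2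
        have l1 := hnest2.length_le
        have hsplit2 : iterW η (k - p) [u (-1)] =
            iterW η (k - 2*p) (DT.chainC η p (fun j => m (j + (k - p))) ++ [a (k - p)]) ++
              iterW η (k - 2*p) r2 := by
          rw [← DT.iterW_append, hr2, ← DT.iterW_add,
            show k - 2*p + p = k - p from by omega]
        have hr2len : 1 ≤ (iterW η (k - 2*p) r2).length := by
          have := DT.iterW_ne_nil hne (k - 2*p) hr2ne
          exact List.length_pos_iff.mpr this
        rw [hrnil, List.append_nil] at hr
        have hWlen := congrArg List.length hsplit2
        have hrlen := congrArg List.length hr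
        simp only [List.length_append, List.length_cons, List.length_nil] at hWlen l1 hrlen
        omega
      · -- Case A
        obtain ⟨y, hy⟩ : ∃ y, r.getLast? = some y := by
          cases hg : r.getLast? with
          | none => exact absurd (List.getLast?_eq_none_iff.mp hg) hrnil
          | some y => exact ⟨y, rfl⟩
        have hrb : r.getLast? = some (u (-1)) := by
          rw [← hr, List.getLast?_append, hy] at lastW
          rw [hy]
          simpa using lastW
        have hstrictA : r.length < (iterW η p r).length :=
          DT.length_lt_of_getLast hne p hrb two1
        have hC0len := hC0.length_le
        have hKlen := congrArg List.length hKsplit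
        have hWlen := congrArg List.length hr
        simp only [List.length_append, List.length_cons, List.length_nil, DT.length_chainC]
          at hC0len hKlen hWlen
        rw [sumLen] at hsum
        have hqz : uQuotPos η p k m =
            ((∑ j ∈ Finset.range (k - p), (iterW η j (m (j + p))).length : ℕ) : ℤ) := by
          rw [uQuotPos]
          push_cast
          rfl
        rw [hqz]
        refine ⟨by omega, by omega, by omega⟩
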